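/- Let B and C be positive diagonal N×N matrices and G a quadratic, energy-preserving, locally Lipschitz map with bilinear form B(·,·) and linearization A[x] = B(x,·). Suppose x_∞ ∈ R^N is a stationary solution of CG(x) − Bx + F = 0 such that −C^{−1}B + A[x_∞] is negative definite. Then along any solution x(t) of ẋ = CG(x) − Bx + F, the quantity V(t) = (x(t) − x_∞)^T C^{−1} (x(t) − x_∞) satisfies V'(t) ≤ −2λ V(t) for some λ > 0, and hence x(t) → x_∞ as t → ∞. -/

import Mathlib

open Filter

/-- Global stability near a stationary solution: let `C`, `B` be positive diagonal matrices
(entries `c i`, `b i`), let `G = (1/2) 𝓑(x,x)` be quadratic, energy-preserving and locally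
Lipschitz with linearization `A[x]y = 𝓑(x,y)`, and let `x_∞` be a stationary solution of
`CG(x) − Bx + F = 0` such that `−C⁻¹B + A[x_∞]` is negative definite.  Then there is
`λ > 0` such that along every solution of `ẋ = CG(x) − Bx + F`, the Lyapunov function
`V(t) = (x(t) − x_∞)ᵀ C⁻¹ (x(t) − x_∞)` satisfies `V'(t) ≤ −2λ V(t)`, and `x(t) → x_∞`. -/
theorem lyapunov_convergence (N : ℕ) [NeZero N]
    (c b : ZMod N → ℝ) (hc : ∀ i, 0 < c i) (hb : ∀ i, 0 < b i)
    (𝓑 : (ZMod N → ℝ) → (ZMod N → ℝ) → ZMod N → ℝ)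
    (hsymm : ∀ x y, 𝓑 x y = 𝓑 y x)
    (hadd : ∀ x y z, 𝓑 (x + y) z = 𝓑 x z + 𝓑 y z)
    (hsmul : ∀ (a : ℝ) (x y), 𝓑 (a • x) y = a • 𝓑 x y)
    (G : (ZMod N → ℝ) → ZMod N → ℝ)
    (hGB : ∀ x, G x = fun i => (1 / 2 : ℝ) * 𝓑 x x i)
    (hGe : ∀ y : ZMod N → ℝ, ∑ i : ZMod N, y i * G y i = 0)
    (hGlip : LocallyLipschitz G)
    (F xs : ZMod N → ℝ)
    (hstat : ∀ i : ZMod N, c i * G xs i - b i * xs i + F i = 0)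
    (hneg : ∀ y : ZMod N → ℝ, y ≠ 0 →
      ∑ i : ZMod N, y i * (-(b i / c i) * y i + 𝓑 xs y i) < 0) :
    ∃ lam : ℝ, 0 < lam ∧
      ∀ x : ℝ → ZMod N → ℝ,
        (∀ (t : ℝ) (i : ZMod N),
          HasDerivAt (fun s => x s i) (c i * G (x t) i - b i * x t i + F i) t) →
        (∀ t : ℝ,
          deriv (fun s => ∑ i : ZMod N, (x s i - xs i) ^ 2 / c i) t
            ≤ -2 * lam * ∑ i : ZMod N, (x t i - xs i) ^ 2 / c i) ∧
        Tendsto x atTop (nhds xs) := by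
  classical
  -- the quadratic form
  set Q : (ZMod N → ℝ) → ℝ :=
    fun y => ∑ i : ZMod N, y i * (-(b i / c i) * y i + 𝓑 xs y i) with hQdef
  -- continuity of Q
  have hL : Continuous fun y : ZMod N → ℝ => 𝓑 y xs := by
    exact (LinearMap.mk (AddHom.mk (fun y => 𝓑 y xs) (fun a b => hadd a b xs))
      (fun a y => hsmul a y xs)).continuous_of_finiteDimensional
  have hQcont : Continuous Q := by
    apply continuous_finset_sum
    intro i _
    have h1 : Continuous fun y : ZMod N → ℝ => y i := continuous_apply i
    have h2 : Continuous fun y : ZMod N → ℝ => 𝓑 xs y i := by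
      have : (fun y : ZMod N → ℝ => 𝓑 xs y i) = fun y => 𝓑 y xs i := by
        funext y; rw [hsymm]
      rw [this]
      exact (continuous_apply i).comp hL
    continuity
  -- homogeneity of Q
  have hQsmul : ∀ (a : ℝ) (y : ZMod N → ℝ), Q (a • y) = a ^ 2 * Q y := by
    intro a y
    rw [hQdef, Finset.mul_sum]
    apply Finset.sum_congr rfl
    intro i _
    have h1 : 𝓑 xs (a • y) i = a * 𝓑 xs y i := by
      rw [hsymm xs (a • y), hsmul, hsymm y xs]
      simp [smul_eq_mul]
    have h2 : (a • y) i = a * y i := rfl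
    rw [h1, h2]; ring
  -- key quadratic bound via compactness
  have Scpos : 0 < ∑ i : ZMod N, (c i)⁻¹ := by
    apply Finset.sum_pos (fun i _ => inv_pos.mpr (hc i))
    exact Finset.univ_nonempty
  obtain ⟨u0, hu0, hmax⟩ :=
    (isCompact_sphere (0 : ZMod N → ℝ) 1).exists_isMaxOn
      (NormedSpace.sphere_nonempty.mpr zero_le_one) hQcont.continuousOn
  have hu0norm : ‖u0‖ = 1 := by simpa using hu0
  have hu0ne : u0 ≠ 0 := fun h => by simp [h] at hu0norm
  have hQu0 : Q u0 < 0 := hneg u0 hu0ne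
  set lam : ℝ := (-Q u0) / ∑ i : ZMod N, (c i)⁻¹ with hlamdef
  have hlampos : 0 < lam := div_pos (by linarith) Scpos
  have key : ∀ y : ZMod N → ℝ, Q y ≤ -lam * ∑ i : ZMod N, (y i) ^ 2 / c i := by
    intro y
    rcases eq_or_ne y 0 with rfl | hy
    · simp [hQdef]
    · have hr : 0 < ‖y‖ := norm_pos_iff.mpr hy
      set u : ZMod N → ℝ := ‖y‖⁻¹ • y with hudef
      have hu : u ∈ Metric.sphere (0 : ZMod N → ℝ) 1 := by
        simp [hudef, norm_smul, abs_of_pos (inv_pos.mpr hr), inv_mul_cancel₀ hr.ne']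
      have hyu : y = ‖y‖ • u := (smul_inv_smul₀ hr.ne' y).symm
      have hQy : Q y ≤ -(-Q u0) * ‖y‖ ^ 2 := by
        have hQu : Q u ≤ Q u0 := hmax hu
        have hQeq : Q y = ‖y‖ ^ 2 * Q u := by
          conv_lhs => rw [hyu]
          rw [hQsmul]
        rw [hQeq]
        nlinarith [sq_nonneg ‖y‖]
      have hVbound : ∑ i : ZMod N, (y i) ^ 2 / c i ≤ (∑ i : ZMod N, (c i)⁻¹) * ‖y‖ ^ 2 := by
        rw [Finset.sum_mul]
        apply Finset.sum_le_sum
        intro i _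
        have h1 : |y i| ≤ ‖y‖ := by
          simpa using norm_le_pi_norm y i
        have h2 : (y i) ^ 2 ≤ ‖y‖ ^ 2 := by
          nlinarith [abs_nonneg (y i), sq_abs (y i)]
        rw [div_eq_mul_inv, mul_comm]
        exact mul_le_mul_of_nonneg_left h2 (inv_pos.mpr (hc i)).le
      have hS : (∑ i : ZMod N, (c i)⁻¹) ≠ 0 := Scpos.ne'
      have : -lam * ((∑ i : ZMod N, (c i)⁻¹) * ‖y‖ ^ 2) = -(-Q u0) * ‖y‖ ^ 2 := by
        rw [hlamdef]
        calc -((-Q u0) / (∑ i : ZMod N, (c i)⁻¹)) * ((∑ i : ZMod N, (c i)⁻¹) * ‖y‖ ^ 2)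
            = Q u0 * ((∑ i : ZMod N, (c i)⁻¹)⁻¹ * (∑ i : ZMod N, (c i)⁻¹)) * ‖y‖ ^ 2 := by
              rw [div_eq_mul_inv]; ring
          _ = -(-Q u0) * ‖y‖ ^ 2 := by rw [inv_mul_cancel₀ hS]; ring
      calc Q y ≤ -(-Q u0) * ‖y‖ ^ 2 := hQy
        _ = -lam * ((∑ i : ZMod N, (c i)⁻¹) * ‖y‖ ^ 2) := this.symm
        _ ≤ -lam * ∑ i : ZMod N, (y i) ^ 2 / c i := by
            apply mul_le_mul_of_nonpos_left hVbound
            linarith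
  refine ⟨lam, hlampos, ?_⟩
  intro x hx
  set V : ℝ → ℝ := fun s => ∑ i : ZMod N, (x s i - xs i) ^ 2 / c i with hVdef
  -- the derivative of V
  have hVderiv : ∀ t : ℝ, HasDerivAt V (2 * Q (fun i => x t i - xs i)) t := by
    intro t
    set y : ZMod N → ℝ := fun i => x t i - xs i with hydef
    have hxy : x t = xs + y := by funext i; simp [hydef]
    have hexp : ∀ i, 𝓑 (x t) (x t) i = 𝓑 xs xs i + 2 * 𝓑 xs y i + 𝓑 y y i := by
      intro i
      rw [hxy, hadd xs y (xs + y), hsymm xs (xs + y), hadd xs y xs,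
        hsymm y (xs + y), hadd xs y y, hsymm y xs]
      simp only [Pi.add_apply]
      ring
    have hd : ∀ i : ZMod N,
        2 * (x t i - xs i) ^ (2 - 1) * (c i * G (x t) i - b i * x t i + F i) / c i
          = 2 * (y i * G y i) + 2 * (y i * (-(b i / c i) * y i + 𝓑 xs y i)) := by
      intro i
      have hci : c i ≠ 0 := (hc i).ne'
      have hF : F i = b i * xs i - c i * G xs i := by linarith [hstat i]
      have hGx : G (x t) i = (1 / 2 : ℝ) * 𝓑 (x t) (x t) i := by rw [hGB]
      have hGxs : G xs i = (1 / 2 : ℝ) * 𝓑 xs xs i := by rw [hGB]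
      have hGy : G y i = (1 / 2 : ℝ) * 𝓑 y y i := by rw [hGB]
      have hyi : y i = x t i - xs i := rfl
      rw [hGx, hGy, hF, hGxs, hexp i, hyi]
      field_simp
      ring
    have hsum : HasDerivAt V
        (∑ i : ZMod N, 2 * (x t i - xs i) ^ (2 - 1) * (c i * G (x t) i - b i * x t i + F i) / c i) t := by
      apply HasDerivAt.fun_sum
      intro i _
      exact (((hx t i).sub_const (xs i)).pow 2).div_const (c i)
    have heq : (∑ i : ZMod N, 2 * (x t i - xs i) ^ (2 - 1) * (c i * G (x t) i - b i * x t i + F i) / c i)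
        = 2 * Q y := by
      rw [Finset.sum_congr rfl (fun i _ => hd i), Finset.sum_add_distrib,
        ← Finset.mul_sum, ← Finset.mul_sum, hGe y, hQdef]
      ring
    rw [heq] at hsum
    exact hsum
  have hVle : ∀ t : ℝ, 2 * Q (fun i => x t i - xs i) ≤ -2 * lam * V t := by
    intro t
    have := key (fun i => x t i - xs i)
    rw [hVdef]
    simp only at this ⊢
    linarith
  have hVnonneg : ∀ t : ℝ, 0 ≤ V t := by
    intro t
    apply Finset.sum_nonneg
    intro i _
    have := hc i
    positivity
  constructor
  · intro t
    have := (hVderiv t).deriv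
    calc deriv (fun s => ∑ i : ZMod N, (x s i - xs i) ^ 2 / c i) t
        = 2 * Q (fun i => x t i - xs i) := this
      _ ≤ -2 * lam * ∑ i : ZMod N, (x t i - xs i) ^ 2 / c i := hVle t
  · -- Grönwall: g t := V t * exp (2 lam t) is antitone
    set g : ℝ → ℝ := fun t => V t * Real.exp (2 * lam * t) with hgdef
    have hgderiv : ∀ t : ℝ, HasDerivAt g
        (2 * Q (fun i => x t i - xs i) * Real.exp (2 * lam * t)
          + V t * (Real.exp (2 * lam * t) * (2 * lam))) t := by
      intro t
      have hexp' : HasDerivAt (fun s : ℝ => Real.exp (2 * lam * s))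
          (Real.exp (2 * lam * t) * (2 * lam)) t := by
        simpa using ((hasDerivAt_id t).const_mul (2 * lam)).exp
      exact (hVderiv t).mul hexp'
    have hganti : Antitone g := by
      apply antitone_of_deriv_nonpos
      · exact fun t => (hgderiv t).differentiableAt
      · intro t
        rw [(hgderiv t).deriv]
        have h1 := hVle t
        have h2 : (0 : ℝ) < Real.exp (2 * lam * t) := Real.exp_pos _
        nlinarith
    have hVbound : ∀ t : ℝ, 0 ≤ t → V t ≤ V 0 * Real.exp (-(2 * lam * t)) := by
      intro t ht
      have := hganti ht
      rw [hgdef] at this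
      simp only [mul_zero, Real.exp_zero, mul_one] at this
      rw [Real.exp_neg]
      rw [← sub_nonneg] at this
      rw [← sub_nonneg]
      have h2 : (0 : ℝ) < Real.exp (2 * lam * t) := Real.exp_pos _
      calc (0 : ℝ) ≤ (V 0 - V t * Real.exp (2 * lam * t)) * (Real.exp (2 * lam * t))⁻¹ := by
            apply mul_nonneg (by linarith) (inv_pos.mpr h2).le
        _ = V 0 * (Real.exp (2 * lam * t))⁻¹ - V t := by
            field_simp
    have hVtendsto : Tendsto V atTop (nhds 0) := by
      have hub : Tendsto (fun t : ℝ => V 0 * Real.exp (-(2 * lam * t))) atTop (nhds 0) := by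
        have h1 : Tendsto (fun t : ℝ => Real.exp (-(2 * lam * t))) atTop (nhds 0) :=
          Real.tendsto_exp_neg_atTop_nhds_zero.comp
            (Tendsto.const_mul_atTop (by linarith) tendsto_id)
        simpa using (h1.const_mul (V 0))
      apply tendsto_of_tendsto_of_tendsto_of_le_of_le' tendsto_const_nhds hub
      · exact Eventually.of_forall hVnonneg
      · filter_upwards [eventually_ge_atTop (0 : ℝ)] with t ht
        exact hVbound t ht
    rw [tendsto_pi_nhds]
    intro i
    have hsq : Tendsto (fun t => (x t i - xs i) ^ 2) atTop (nhds 0) := by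
      have hub : Tendsto (fun t => c i * V t) atTop (nhds 0) := by
        simpa using hVtendsto.const_mul (c i)
      apply tendsto_of_tendsto_of_tendsto_of_le_of_le' tendsto_const_nhds hub
      · exact Eventually.of_forall (fun t => sq_nonneg _)
      · apply Eventually.of_forall
        intro t
        have h1 : (x t i - xs i) ^ 2 / c i ≤ V t := by
          have h := Finset.single_le_sum (f := fun j => (x t j - xs j) ^ 2 / c j)
            (fun j _ => by have := hc j; positivity) (Finset.mem_univ i)
          simpa [hVdef] using h
        have hci := hc i
        calc (x t i - xs i) ^ 2 = c i * ((x t i - xs i) ^ 2 / c i) := by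
              field_simp
          _ ≤ c i * V t := by nlinarith
    have habs : Tendsto (fun t => |x t i - xs i|) atTop (nhds 0) := by
      have := (Real.continuous_sqrt.tendsto 0).comp hsq
      simpa [Function.comp_def, Real.sqrt_sq_eq_abs] using this
    have hdiff : Tendsto (fun t => x t i - xs i) atTop (nhds 0) := by
      apply tendsto_of_tendsto_of_tendsto_of_le_of_le' (by simpa using habs.neg) habs
      · exact Eventually.of_forall (fun t => neg_abs_le _)
      · exact Eventually.of_forall (fun t => le_abs_self _)
    have := hdiff.add_const (xs i)
    simpa using this
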